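/- In G = ℤ² ⋊ ℤ/2ℤ (swap action) with a = ((1,0),0), t = ((0,0),1), the word length (distance from the identity in the Cayley graph with respect to A = {a±1, t±1}) of the element ((x,y),1) equals |x| + |y| + 1 for all integers x, y. -/

import Mathlib

/-- The coordinate-swapping automorphism of ℤ². -/
def swapAut : MulAut (Multiplicative (ℤ × ℤ)) :=
  AddEquiv.toMultiplicative (AddEquiv.prodComm : (ℤ × ℤ) ≃+ (ℤ × ℤ))

lemma swapAut_sq : swapAut ^ 2 = 1 := by
  refine MulEquiv.ext fun z => ?_
  show swapAut (swapAut z) = z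
  cases z
  rfl

/-- The action of ℤ/2ℤ on ℤ² by swapping the two coordinates. -/
def swapAction : Multiplicative (ZMod 2) →* MulAut (Multiplicative (ℤ × ℤ)) where
  toFun ε := swapAut ^ (Multiplicative.toAdd ε).val
  map_one' := rfl
  map_mul' x y := by
    show swapAut ^ _ = swapAut ^ _ * swapAut ^ _
    rw [← pow_add]
    have key : ∀ m n : ℕ, m % 2 = n % 2 → swapAut ^ m = swapAut ^ n := by
      intro m n h
      rw [← Nat.div_add_mod m 2, ← Nat.div_add_mod n 2, h, pow_add, pow_add,
        pow_mul, pow_mul, swapAut_sq]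
      simp
    apply key
    have := ZMod.val_add (Multiplicative.toAdd x) (Multiplicative.toAdd y)
    simp only [toAdd_mul] at *
    omega

/-- The group G = ℤ² ⋊ ℤ/2ℤ with the swap action. -/
abbrev GG := SemidirectProduct (Multiplicative (ℤ × ℤ)) (Multiplicative (ZMod 2)) swapAction

/-- The generator a = ((1,0), 0). -/
def ga : GG := SemidirectProduct.inl (Multiplicative.ofAdd ((1, 0) : ℤ × ℤ))

/-- The generator t = ((0,0), 1). -/
def gt : GG := SemidirectProduct.inr (Multiplicative.ofAdd (1 : ZMod 2))

/-- The element ((x,y), ε) of G. -/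
def el (x y : ℤ) (ε : ZMod 2) : GG :=
  ⟨Multiplicative.ofAdd (x, y), Multiplicative.ofAdd ε⟩

/-- The generating set A = {a, a⁻¹, t, t⁻¹}. -/
def GenSet : Set GG := {ga, ga⁻¹, gt, gt⁻¹}

/-- `w` is a word over the alphabet A. -/
def IsWord (w : List GG) : Prop := ∀ x ∈ w, x ∈ GenSet

/-- `w` is a word over A representing the group element `g` (via its product). -/
def Represents (w : List GG) (g : GG) : Prop := IsWord w ∧ w.prod = g

/-- The word length of `g`: minimal length of a word over A representing `g`. -/
noncomputable def wordLength (g : GG) : ℕ :=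
  sInf {n | ∃ w : List GG, Represents w g ∧ w.length = n}

/-- A word over A is geodesic if no strictly shorter word over A represents
the same element. -/
def IsGeodesic (w : List GG) : Prop :=
  IsWord w ∧ ∀ v : List GG, IsWord v → v.prod = w.prod → w.length ≤ v.length

open Classical in
/-- The number of t-letters of a word (occurrences of t and t⁻¹). -/
noncomputable def tCount (w : List GG) : ℕ :=
  w.countP (fun x => decide (x = gt ∨ x = gt⁻¹))

/-- The word aˣ over A: x letters `a` if x ≥ 0, |x| letters `a⁻¹` if x < 0. -/
def apow (x : ℤ) : List GG :=
  if 0 ≤ x then List.replicate x.toNat ga else List.replicate (-x).toNat ga⁻¹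

/-- The word metric on G with respect to A. -/
noncomputable def dA (g h : GG) : ℕ := wordLength (g⁻¹ * h)

/-- The point of G reached at time i along the word w (the endpoint if i
exceeds the length of w). -/
def pt (w : List GG) (i : ℕ) : GG := (w.take i).prod

/-- Words u and w synchronously k-fellow travel. -/
def FellowTravels (k : ℕ) (u w : List GG) : Prop :=
  ∀ i : ℕ, dA (pt u i) (pt w i) ≤ k

lemma ga_pow (n : ℕ) : ga ^ n = SemidirectProduct.inl (Multiplicative.ofAdd (((n : ℤ), 0) : ℤ × ℤ)) := by
  induction n with
  | zero => simp; rfl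
  | succ n ih =>
    rw [pow_succ, ih]
    show _ = SemidirectProduct.inl _
    rw [ga, ← map_mul, ← ofAdd_add]
    congr 2

lemma gainv_pow (n : ℕ) : ga⁻¹ ^ n = SemidirectProduct.inl (Multiplicative.ofAdd ((-(n : ℤ), 0) : ℤ × ℤ)) := by
  induction n with
  | zero => simp; rfl
  | succ n ih =>
    rw [pow_succ, ih]
    rw [ga, ← map_inv, ← map_mul, ← ofAdd_neg, ← ofAdd_add]
    congr 3
    simp [Prod.ext_iff]
    ring

lemma apow_prod (x : ℤ) : (apow x).prod = SemidirectProduct.inl (Multiplicative.ofAdd ((x, 0) : ℤ × ℤ)) := by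
  unfold apow
  split_ifs with h
  · rw [List.prod_replicate, ga_pow, Int.toNat_of_nonneg h]
  · rw [List.prod_replicate, gainv_pow, Int.toNat_of_nonneg (by omega : (0:ℤ) ≤ -x), neg_neg]

lemma apow_length (x : ℤ) : (apow x).length = x.natAbs := by
  unfold apow; split_ifs with h <;> simp <;> omega

lemma apow_isword (x : ℤ) : IsWord (apow x) := by
  intro g hg
  unfold apow at hg
  split_ifs at hg <;> rw [List.eq_of_mem_replicate hg] <;> simp [GenSet]

lemma key_prod (x y : ℤ) :
    SemidirectProduct.inl (Multiplicative.ofAdd ((x, 0) : ℤ × ℤ)) *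
      (gt * SemidirectProduct.inl (Multiplicative.ofAdd ((y, 0) : ℤ × ℤ))) = el x y 1 := by
  apply SemidirectProduct.ext
  · show Multiplicative.ofAdd ((x,0) : ℤ×ℤ) * swapAction 1 (1 * swapAction (Multiplicative.ofAdd (1 : ZMod 2)) (Multiplicative.ofAdd ((y,0):ℤ×ℤ))) = Multiplicative.ofAdd ((x,y):ℤ×ℤ)
    simp
    show Multiplicative.ofAdd ((x,0) : ℤ×ℤ) * Multiplicative.ofAdd ((0,y):ℤ×ℤ) = _
    rw [← ofAdd_add, Prod.mk_add_mk]
    norm_num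
  · show Multiplicative.ofAdd (0 : ZMod 2) * (Multiplicative.ofAdd (1 : ZMod 2) * Multiplicative.ofAdd (0 : ZMod 2)) = Multiplicative.ofAdd (1 : ZMod 2)
    decide

/-- Weight function giving the lower bound. -/
def phi (g : GG) : ℕ :=
  (Multiplicative.toAdd g.left).1.natAbs + (Multiplicative.toAdd g.left).2.natAbs +
    (Multiplicative.toAdd g.right).val

lemma phi_inl_mul (p : ℤ × ℤ) (g : GG) :
    phi (SemidirectProduct.inl (Multiplicative.ofAdd p) * g) =
      ((p + Multiplicative.toAdd g.left).1.natAbs + (p + Multiplicative.toAdd g.left).2.natAbs +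
        (Multiplicative.toAdd g.right).val) := by
  unfold phi
  simp

lemma phi_gt_mul (g : GG) :
    phi (gt * g) = (Multiplicative.toAdd g.left).2.natAbs + (Multiplicative.toAdd g.left).1.natAbs +
      ((1 : ZMod 2) + Multiplicative.toAdd g.right).val := by
  have hl : (gt * g).left = swapAut g.left := by
    show (1 : Multiplicative (ℤ × ℤ)) * swapAction (Multiplicative.ofAdd (1 : ZMod 2)) g.left = _
    rw [one_mul]
    rfl
  have hr : (gt * g).right = Multiplicative.ofAdd (1 : ZMod 2) * g.right := by
    show Multiplicative.ofAdd (1 : ZMod 2) * g.right = _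
    rfl
  unfold phi
  rw [hl, hr]
  rfl

lemma gtinv : gt⁻¹ = gt := by decide

lemma gainv : ga⁻¹ = SemidirectProduct.inl (Multiplicative.ofAdd ((-1, 0) : ℤ × ℤ)) := by
  rw [ga, ← map_inv]
  rfl

lemma phi_gen_mul (s : GG) (g : GG) (hs : s ∈ GenSet) : phi (s * g) ≤ phi g + 1 := by
  have hval : (Multiplicative.toAdd g.right).val < 2 := ZMod.val_lt _
  simp only [GenSet, Set.mem_insert_iff, Set.mem_singleton_iff] at hs
  rcases hs with h | h | h | h
  · subst h
    rw [ga, phi_inl_mul]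
    unfold phi
    simp only [Prod.fst_add, Prod.snd_add]
    omega
  · subst h
    rw [gainv, phi_inl_mul]
    unfold phi
    simp only [Prod.fst_add, Prod.snd_add]
    omega
  · subst h
    rw [phi_gt_mul]
    have h2 : ((1 : ZMod 2) + Multiplicative.toAdd g.right).val < 2 := ZMod.val_lt _
    unfold phi
    omega
  · rw [h, gtinv, phi_gt_mul]
    have h2 : ((1 : ZMod 2) + Multiplicative.toAdd g.right).val < 2 := ZMod.val_lt _
    unfold phi
    omega

lemma phi_prod (w : List GG) (hw : IsWord w) : phi w.prod ≤ w.length := by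
  induction w with
  | nil => simp [phi]
  | cons s w ih =>
    rw [List.prod_cons, List.length_cons]
    have h1 := phi_gen_mul s w.prod (hw s List.mem_cons_self)
    have h2 := ih (fun x hx => hw x (List.mem_cons_of_mem s hx))
    omega

lemma phi_el (x y : ℤ) : phi (el x y 1) = x.natAbs + y.natAbs + 1 := rfl

/-- The word length of the element ((x,y),1) equals |x| + |y| + 1. -/
theorem wordLength_top (x y : ℤ) : wordLength (el x y 1) = x.natAbs + y.natAbs + 1 := by
  have hmem : x.natAbs + y.natAbs + 1 ∈
      {n | ∃ w : List GG, Represents w (el x y 1) ∧ w.length = n} := by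
    refine ⟨apow x ++ gt :: apow y, ⟨?_, ?_⟩, ?_⟩
    · intro g hg
      rcases List.mem_append.mp hg with h | h
      · exact apow_isword x g h
      · rcases List.mem_cons.mp h with h | h
        · rw [h]; simp [GenSet]
        · exact apow_isword y g h
    · rw [List.prod_append, List.prod_cons, apow_prod, apow_prod, key_prod]
    · simp [apow_length]
      omega
  refine le_antisymm (Nat.sInf_le hmem) (le_csInf ⟨_, hmem⟩ ?_)
  rintro n ⟨w, ⟨hw, hp⟩, hl⟩
  have := phi_prod w hw
  rw [hp, phi_el] at this
  omega
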